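/- With Q, R, J the simultaneously defined syntactic classes, for every θ ∈ J, intuitionistic logic proves θ^E → ¬_E¬_E θ, i.e. θ^E → ((θ → E) → E). -/
import Mathlib


/-- First-order formulas over a domain `α` with atomic propositions indexed by `ι`,
quantifiers rendered via higher-order abstract syntax. -/
inductive Fml (α ι : Type) : Type where
  | atom : ι → Fml α ι
  | bot : Fml α ι
  | and : Fml α ι → Fml α ι → Fml α ι
  | or : Fml α ι → Fml α ι → Fml α ι
  | imp : Fml α ι → Fml α ι → Fml α ι
  | all : (α → Fml α ι) → Fml α ι
  | ex : (α → Fml α ι) → Fml α ι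

/-- Standard semantic evaluation of a formula, given an interpretation `v` of the atoms. -/
def Fml.eval {α ι : Type} (v : ι → Prop) : Fml α ι → Prop
  | .atom i => v i
  | .bot => False
  | .and φ ψ => φ.eval v ∧ ψ.eval v
  | .or φ ψ => φ.eval v ∨ ψ.eval v
  | .imp φ ψ => φ.eval v → ψ.eval v
  | .all f => ∀ x, (f x).eval v
  | .ex f => ((∃ x, (f x).eval v))

/-- Semantic evaluation of the E-negative (Gentzen–Gödel style) translation `φ^E`:
`P^E := ¬_E¬_E P` for atoms, `⊥^E := E`, commuting with `∧`, `→`, `∀`, and with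
`¬_E¬_E` prefixed to `∨` and `∃`, where `¬_E θ := θ → E`. -/
def Fml.evalE {α ι : Type} (v : ι → Prop) (E : Prop) : Fml α ι → Prop
  | .atom i => (v i → E) → E
  | .bot => E
  | .and φ ψ => φ.evalE v E ∧ ψ.evalE v E
  | .or φ ψ => ((φ.evalE v E ∨ ψ.evalE v E) → E) → E
  | .imp φ ψ => φ.evalE v E → ψ.evalE v E
  | .all f => ∀ x, (f x).evalE v E
  | .ex f => ((∃ x, (f x).evalE v E) → E) → E

mutual
  /-- The syntactic class `Q`. -/
  inductive InQ {α ι : Type} : Fml α ι → Prop where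
    | bot : InQ .bot
    | atom (i : ι) : InQ (.atom i)
    | and {φ ψ} : InQ φ → InQ ψ → InQ (.and φ ψ)
    | or {φ ψ} : InQ φ → InQ ψ → InQ (.or φ ψ)
    | ex {f} : (∀ x, InQ (f x)) → InQ (.ex f)
    | all {f} : (∀ x, InQ (f x)) → InQ (.all f)
    | imp {φ ψ} : InJ φ → InQ ψ → InQ (.imp φ ψ)

  /-- The syntactic class `R`. -/
  inductive InR {α ι : Type} : Fml α ι → Prop where
    | bot : InR .bot
    | and {φ ψ} : InR φ → InR ψ → InR (.and φ ψ)
    | or {φ ψ} : InR φ → InR ψ → InR (.or φ ψ)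
    | all {f} : (∀ x, InR (f x)) → InR (.all f)
    | imp {φ ψ} : InJ φ → InR ψ → InR (.imp φ ψ)

  /-- The syntactic class `J`. -/
  inductive InJ {α ι : Type} : Fml α ι → Prop where
    | bot : InJ .bot
    | atom (i : ι) : InJ (.atom i)
    | and {φ ψ} : InJ φ → InJ ψ → InJ (.and φ ψ)
    | or {φ ψ} : InJ φ → InJ ψ → InJ (.or φ ψ)
    | ex {f} : (∀ x, InJ (f x)) → InJ (.ex f)
    | imp {φ ψ} : InR φ → InJ ψ → InJ (.imp φ ψ)
end

theorem jr_lemma {α ι : Type} (v : ι → Prop) (E : Prop) :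
    ∀ (θ : Fml α ι) (hθ : InJ θ), θ.evalE v E → ((θ.eval v → E) → E) := by
  have main : ∀ (θ : Fml α ι) (hθ : InJ θ),
      (θ.evalE v E → ((θ.eval v → E) → E)) := by
    intro θ hθ
    refine InJ.rec (motive_1 := fun _ _ => True)
      (motive_2 := fun φ _ => ∀ C : Prop, ((φ.eval v → C) → E) → φ.evalE v E)
      (motive_3 := fun φ _ => φ.evalE v E → ((φ.eval v → E) → E))
      ?_ ?_ ?_ ?_ ?_ ?_ ?_ ?_ ?_ ?_ ?_ ?_ ?_ ?_ ?_ ?_ ?_ ?_ hθ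
    -- Q cases (trivial motive)
    · trivial
    · intro _; trivial
    · intro _ _ _ _ _ _; trivial
    · intro _ _ _ _ _ _; trivial
    · intro _ _ _; trivial
    · intro _ _ _; trivial
    · intro _ _ _ _ _ _; trivial
    -- R cases : motive_2
    · -- bot
      intro C k
      exact k (fun h => h.elim)
    · -- and
      intro φ ψ _ _ ihφ ihψ C k
      exact ⟨ihφ (ψ.eval v → C) (fun g => k (fun p => g p.1 p.2)),
             ihψ (φ.eval v → C) (fun g => k (fun p => g p.2 p.1))⟩
    · -- or
      intro φ ψ _ _ ihφ ihψ C k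
      intro m
      exact m (Or.inl (ihφ C (fun f =>
        m (Or.inr (ihψ C (fun g => k (fun d => d.elim f g)))))))
    · -- all
      intro f _ ih C k
      intro x
      exact ih x C (fun t => k (fun u => t (u x)))
    · -- imp (φ ∈ J, ψ ∈ R)
      intro φ ψ _ _ ihφ ihψ C k
      intro a
      exact ihψ C (fun s => ihφ a (fun x => k (fun t => s (t x))))
    -- J cases : motive_3
    · -- bot
      intro e _; exact e
    · -- atom
      intro i h; exact h
    · -- and
      intro φ ψ _ _ ihφ ihψ h k
      exact ihφ h.1 (fun a => ihψ h.2 (fun b => k ⟨a, b⟩))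
    · -- or
      intro φ ψ _ _ ihφ ihψ h k
      exact h (fun d => d.elim (fun a => ihφ a (fun x => k (Or.inl x)))
                              (fun b => ihψ b (fun y => k (Or.inr y))))
    · -- ex
      intro f _ ih h k
      exact h (fun ⟨x, a⟩ => ih x a (fun y => k ⟨x, y⟩))
    · -- imp (φ ∈ R, ψ ∈ J)
      intro φ ψ _ _ ihφ ihψ h k
      have qψ : ψ.eval v → E := fun y => k (fun _ => y)
      have φE : φ.evalE v E := ihφ (ψ.eval v) k
      exact ihψ (h φE) qψ
  exact main

theorem stmt15' {α ι : Type} (θ : Fml α ι) (hθ : InJ θ) (v : ι → Prop) (E : Prop) :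
    θ.evalE v E → ((θ.eval v → E) → E) := jr_lemma v E θ hθ

/-- For `θ ∈ J`, intuitionistic logic proves `θ^E → ¬_E¬_E θ`. -/
theorem stmt15 {α ι : Type} (θ : Fml α ι) (hθ : InJ θ) (v : ι → Prop) (E : Prop) :
    θ.evalE v E → ((θ.eval v → E) → E) := jr_lemma v E θ hθ
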